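/- For every integer k with 1 ≤ k ≤ 6, every γ ∈ (0,1) and every κ > 0 there exists θ₀ ∈ (π/2, π) such that for every θ ∈ (π/2, θ₀] there is a constant c > 0 with the following property: for every τ > 0 satisfying κ·τ·sin θ ≤ π and every z ∈ Γ^τ_{θ,κ}, one has |(δ_τ(e^{−zτ}))^γ − z^γ| ≤ c·τ^k·|z|^{k+γ}. -/

import Mathlib

open Real

/-- Generating polynomial of the k-step BDF method: δ(ξ) = ∑_{j=1}^{k} (1/j)(1−ξ)^j. -/
noncomputable def bdfDelta (k : ℕ) (ξ : ℂ) : ℂ :=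
  ∑ j ∈ Finset.Icc 1 k, (1 / (j : ℂ)) * (1 - ξ) ^ j

/-- Truncated sectorial contour Γ^τ_{θ,κ}. -/
noncomputable def contourTrunc (θ κ τ : ℝ) : Set ℂ :=
  {z : ℂ | ‖z‖ = κ ∧ |z.arg| ≤ θ} ∪
    {z : ℂ | ∃ r : ℝ, κ ≤ r ∧ r ≤ π / (τ * Real.sin θ) ∧
      (z = (r : ℂ) * Complex.exp (θ * Complex.I) ∨
        z = (r : ℂ) * Complex.exp (-θ * Complex.I))}

/- ### Auxiliary lemmas -/

lemma aux_rpow_le_one_add {a g : ℝ} (ha : 0 ≤ a) (h0 : 0 ≤ g) (h1 : g ≤ 1) :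
    a ^ g ≤ 1 + a := by
  rcases le_or_gt a 1 with h | h
  · have := Real.rpow_le_one ha h h0
    linarith
  · have h2 : a ^ g ≤ a ^ (1:ℝ) := Real.rpow_le_rpow_of_exponent_le h.le h1
    rw [Real.rpow_one] at h2
    linarith

lemma aux_cpow_real_mul {r : ℝ} (hr : 0 < r) {x : ℂ} (hx : x ≠ 0) (g : ℂ) :
    ((r : ℂ) * x) ^ g = (r : ℂ) ^ g * x ^ g := by
  have hr0 : (r : ℂ) ≠ 0 := by exact_mod_cast hr.ne'
  rw [Complex.cpow_def_of_ne_zero (mul_ne_zero hr0 hx), Complex.cpow_def_of_ne_zero hr0,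
    Complex.cpow_def_of_ne_zero hx, Complex.log_ofReal_mul hr hx, add_mul, Complex.exp_add,
    ← Complex.ofReal_log hr.le]

lemma aux_cpow_div (x : ℂ) {τ : ℝ} (hτ : 0 < τ) {g : ℝ} (hg : g ≠ 0) :
    (x / (τ : ℂ)) ^ (g : ℂ) = x ^ (g : ℂ) / (τ : ℂ) ^ (g : ℂ) := by
  have hτ0 : (τ : ℂ) ≠ 0 := by exact_mod_cast hτ.ne'
  have hg0 : (g : ℂ) ≠ 0 := by exact_mod_cast hg
  rcases eq_or_ne x 0 with rfl | hx
  · simp [Complex.zero_cpow hg0]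
  · have h1 : x / (τ : ℂ) = ((τ⁻¹ : ℝ) : ℂ) * x := by
      push_cast; field_simp
    rw [h1, aux_cpow_real_mul (inv_pos.mpr hτ) hx, Complex.ofReal_inv,
      Complex.inv_cpow _ _ (by rw [Complex.arg_ofReal_of_nonneg hτ.le]; exact Real.pi_ne_zero.symm),
      div_eq_mul_inv, mul_comm]

lemma aux_arg_one_add {u : ℂ} (hu : norm u ≤ 1/4) : |Complex.arg (1 + u)| ≤ π / 6 := by
  have hre : (3:ℝ)/4 ≤ (1 + u).re := by
    have := Complex.abs_re_le_norm u
    simp only [Complex.add_re, Complex.one_re]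
    cases' abs_le.mp (this.trans hu) with h1 h2
    linarith
  have habs : (3:ℝ)/4 ≤ norm (1 + u) := hre.trans (Complex.re_le_norm _)
  have him : |(1 + u).im| ≤ 1/4 := by
    simp only [Complex.add_im, Complex.one_im, zero_add]
    exact (Complex.abs_im_le_norm u).trans hu
  have harg : Complex.arg (1 + u) = Real.arcsin ((1 + u).im / norm (1 + u)) :=
    Complex.arg_of_re_nonneg (by linarith)
  have ht : |(1 + u).im / norm (1 + u)| ≤ 1/2 := by
    rw [abs_div, abs_of_nonneg (norm_nonneg _)]
    rw [div_le_iff₀ (by linarith)]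
    linarith
  have hπ6 : Real.arcsin (1/2) = π/6 := by
    have h := Real.arcsin_sin (x := π/6) (by linarith [pi_pos]) (by linarith [pi_pos])
    rw [Real.sin_pi_div_six] at h
    exact h
  have hπ6' : Real.arcsin (-(1/2)) = -(π/6) := by rw [Real.arcsin_neg, hπ6]
  rw [harg]
  cases' abs_le.mp ht with h1 h2
  rw [abs_le]
  exact ⟨by rw [← hπ6']; exact Real.monotone_arcsin h1,
         by rw [← hπ6]; exact Real.monotone_arcsin h2⟩

/-- Near-zero estimate: for `|w| ≤ 1/1024` in the sector `|arg w| ≤ 2π/3`,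
`|δ(e^{-w})^γ - w^γ| ≤ 768 |w|^{k+γ}`. -/
lemma aux_near (k : ℕ) (hk1 : 1 ≤ k) (hk6 : k ≤ 6) {g : ℝ} (hg0 : 0 < g) (hg1 : g < 1)
    (w : ℂ) (hw : w ≠ 0) (harg : |w.arg| ≤ 2 * π / 3)
    (hsmall : norm w ≤ 1 / 1024) :
    norm ((bdfDelta k (Complex.exp (-w))) ^ (g : ℂ) - w ^ (g : ℂ))
      ≤ 768 * norm w ^ ((k : ℝ) + g) := by
  have hwpos : 0 < norm w := norm_pos_iff.mpr hw
  set x : ℂ := 1 - Complex.exp (-w) with hxdef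
  have hx2 : norm x ≤ 2 * norm w := by
    have h1 : norm (-w) ≤ 1 := by
      rw [norm_neg]; linarith
    have := Complex.norm_exp_sub_one_le h1
    rw [norm_neg] at this
    calc norm x = norm (Complex.exp (-w) - 1) := by
          rw [hxdef, ← norm_neg]; ring_nf
      _ ≤ 2 * norm w := this
  have hxlt : norm x ≤ 1 / 512 := by linarith
  have hxlt1 : ‖x‖ < 1 := by linarith
  have hsum : HasSum (fun n : ℕ => x ^ n / n) w := by
    have h := Complex.hasSum_taylorSeries_neg_log hxlt1
    have h1x : (1 : ℂ) - x = Complex.exp (-w) := by rw [hxdef]; ring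
    have himw : |(-w).im| ≤ 1/1024 := by
      have h2 : |(-w).im| ≤ norm (-w) := Complex.abs_im_le_norm _
      rw [norm_neg] at h2
      linarith
    have hπ : (3:ℝ) < π := by linarith [Real.pi_gt_three]
    cases' abs_le.mp himw with hl hr
    rw [h1x, Complex.log_exp (by linarith) (by linarith)] at h
    simpa using h
  set D : ℂ := bdfDelta k (Complex.exp (-w)) with hDdef
  have hδ : D = ∑ j ∈ Finset.range (k + 1), x ^ j / (j : ℂ) := by
    have hins : Finset.range (k + 1) = insert 0 (Finset.Icc 1 k) := by
      ext j; simp [Finset.mem_range, Finset.mem_insert, Finset.mem_Icc]; omega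
    rw [hins, Finset.sum_insert (by simp)]
    simp only [pow_zero, Nat.cast_zero, div_zero, zero_add]
    rw [hDdef, bdfDelta]
    exact Finset.sum_congr rfl fun j hj => one_div_mul_eq_div _ _
  have htail : HasSum (fun n : ℕ => x ^ (n + (k+1)) / ((n + (k+1) : ℕ) : ℂ)) (w - D) := by
    have := (hasSum_nat_add_iff' (f := fun n : ℕ => x ^ n / (n : ℂ)) (k+1)).mpr hsum
    rw [← hδ] at this
    exact this
  have hgeom : HasSum (fun n : ℕ => norm x ^ (k+1) * norm x ^ n)
      (norm x ^ (k+1) * (1 - norm x)⁻¹) :=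
    (hasSum_geometric_of_lt_one (norm_nonneg x)
      (by exact hxlt1)).mul_left _
  have hRbound : norm (w - D) ≤ norm x ^ (k+1) * (1 - norm x)⁻¹ := by
    refine htail.norm_le_of_bounded hgeom ?_
    intro n
    rw [norm_div, norm_pow]
    calc norm x ^ (n + (k+1)) / norm ((n + (k+1) : ℕ) : ℂ)
        ≤ norm x ^ (n + (k+1)) / 1 := by
          apply div_le_div_of_nonneg_left ?_ ?_ ?_ |>.trans_eq rfl
          · positivity
          · norm_num
          · rw [Complex.norm_natCast]; exact_mod_cast Nat.one_le_iff_ne_zero.mpr (by omega)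
      _ = norm x ^ (k+1) * norm x ^ n := by rw [div_one, pow_add, mul_comm]
  have hR : norm (w - D) ≤ 256 * norm w ^ (k+1) := by
    have h1 : norm x ^ (k+1) ≤ 2 ^ (k+1) * norm w ^ (k+1) := by
      calc norm x ^ (k+1) ≤ (2 * norm w) ^ (k+1) :=
            pow_le_pow_left₀ (norm_nonneg _) hx2 _
        _ = 2 ^ (k+1) * norm w ^ (k+1) := mul_pow _ _ _
    have h2 : (2:ℝ) ^ (k+1) ≤ 128 := by
      calc (2:ℝ) ^ (k+1) ≤ 2 ^ 7 := pow_le_pow_right₀ (by norm_num) (by omega)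
        _ = 128 := by norm_num
    have h3 : (1 - norm x)⁻¹ ≤ 2 := by
      rw [inv_le_comm₀ (by linarith) (by norm_num)]
      linarith
    have h4 : (0:ℝ) ≤ norm w ^ (k+1) := by positivity
    calc norm (w - D) ≤ norm x ^ (k+1) * (1 - norm x)⁻¹ := hRbound
      _ ≤ (2 ^ (k+1) * norm w ^ (k+1)) * 2 :=
          mul_le_mul h1 h3 (by rw [inv_nonneg]; linarith) (by positivity)
      _ ≤ (128 * norm w ^ (k+1)) * 2 := by nlinarith
      _ = 256 * norm w ^ (k+1) := by ring
  set u : ℂ := (D - w) / w with hudef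
  have hDwu : D = w * (1 + u) := by
    rw [hudef]; field_simp; ring
  have habsu : norm u ≤ 256 * norm w ^ k := by
    rw [hudef, norm_div, div_le_iff₀ hwpos]
    calc norm (D - w) = norm (w - D) := by rw [norm_sub_rev]
      _ ≤ 256 * norm w ^ (k+1) := hR
      _ = 256 * norm w ^ k * norm w := by rw [pow_succ]; ring
  have hu4 : norm u ≤ 1/4 := by
    have h1 : norm w ^ k ≤ (1/1024 : ℝ) ^ k := pow_le_pow_left₀ hwpos.le hsmall k
    have h2 : ((1:ℝ)/1024) ^ k ≤ (1/1024 : ℝ) ^ 1 :=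
      pow_le_pow_of_le_one (by norm_num) (by norm_num) hk1
    rw [pow_one] at h2
    linarith
  have h1u : (1 : ℂ) + u ≠ 0 := by
    intro h
    have hu1 : u = -1 := by linear_combination h
    rw [hu1] at hu4
    simp at hu4
    linarith
  have hargu := aux_arg_one_add hu4
  have hlog : Complex.log (w * (1 + u)) = Complex.log w + Complex.log (1 + u) := by
    refine Complex.log_mul hw h1u ?_
    have hπ := Real.pi_pos
    cases' abs_le.mp harg with ha1 ha2
    cases' abs_le.mp hargu with hb1 hb2
    constructor
    · linarith
    · linarith
  have hcpow : D ^ (g : ℂ) = w ^ (g : ℂ) * (1 + u) ^ (g : ℂ) := by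
    rw [hDwu, Complex.cpow_def_of_ne_zero (mul_ne_zero hw h1u), hlog, add_mul,
      Complex.exp_add, ← Complex.cpow_def_of_ne_zero hw, ← Complex.cpow_def_of_ne_zero h1u]
  have hkey : D ^ (g : ℂ) - w ^ (g : ℂ) = w ^ (g : ℂ) * ((1 + u) ^ (g : ℂ) - 1) := by
    rw [hcpow]; ring
  have hlogu : ‖Complex.log (1 + u)‖ ≤ 3/2 * ‖u‖ :=
    Complex.norm_log_one_add_half_le_self (by linarith)
  have hfac : norm ((1 + u) ^ (g : ℂ) - 1) ≤ 3 * norm u := by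
    rw [Complex.cpow_def_of_ne_zero h1u]
    have habsmul : norm (Complex.log (1 + u) * (g : ℂ)) ≤ 3/2 * norm u * g := by
      rw [norm_mul, Complex.norm_real, Real.norm_eq_abs, abs_of_pos hg0]
      exact mul_le_mul_of_nonneg_right hlogu hg0.le
    have hle1 : norm (Complex.log (1 + u) * (g : ℂ)) ≤ 1 := by
      have : (3:ℝ)/2 * norm u * g ≤ 3/2 * (1/4) * 1 := by
        apply mul_le_mul (mul_le_mul_of_nonneg_left hu4 (by norm_num)) hg1.le hg0.le
        norm_num
      linarith
    calc norm (Complex.exp (Complex.log (1 + u) * (g : ℂ)) - 1)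
        ≤ 2 * norm (Complex.log (1 + u) * (g : ℂ)) := Complex.norm_exp_sub_one_le hle1
      _ ≤ 2 * (3/2 * norm u * g) := by linarith
      _ ≤ 3 * norm u := by nlinarith [norm_nonneg u]
  have hrw : norm w ^ ((k : ℝ) + g) = norm w ^ k * norm w ^ g := by
    rw [Real.rpow_add hwpos, Real.rpow_natCast]
  calc norm (D ^ (g : ℂ) - w ^ (g : ℂ))
      = norm w ^ g * norm ((1 + u) ^ (g : ℂ) - 1) := by
        rw [hkey, norm_mul, Complex.norm_cpow_real]
    _ ≤ norm w ^ g * (3 * norm u) := by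
        apply mul_le_mul_of_nonneg_left hfac (Real.rpow_nonneg hwpos.le g)
    _ ≤ norm w ^ g * (3 * (256 * norm w ^ k)) := by
        apply mul_le_mul_of_nonneg_left (by linarith) (Real.rpow_nonneg hwpos.le g)
    _ = 768 * norm w ^ ((k : ℝ) + g) := by rw [hrw]; ring

/-- Away-from-zero estimate. -/
lemma aux_far (k : ℕ) (hk1 : 1 ≤ k) (hk6 : k ≤ 6) {g : ℝ} (hg0 : 0 < g) (hg1 : g < 1)
    (w : ℂ) (hlo : 1/1024 ≤ norm w) (hhi : norm w ≤ 7) :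
    norm ((bdfDelta k (Complex.exp (-w))) ^ (g : ℂ) - w ^ (g : ℂ))
      ≤ (6 * (1 + Real.exp 7) ^ 6 + 10) * 2 ^ 70 * norm w ^ ((k : ℝ) + g) := by
  have he7 : (1:ℝ) ≤ 1 + Real.exp 7 := by linarith [Real.exp_pos 7]
  set x : ℂ := 1 - Complex.exp (-w) with hxdef
  have habsx : norm x ≤ 1 + Real.exp 7 := by
    calc norm x ≤ norm (1:ℂ) + norm (Complex.exp (-w)) := by
          simpa using norm_sub_le (1:ℂ) (Complex.exp (-w))
      _ ≤ 1 + Real.exp 7 := by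
          rw [norm_one, Complex.norm_exp]
          have h1 : (-w).re ≤ 7 := by
            have := Complex.abs_re_le_norm (-w)
            rw [norm_neg] at this
            cases' abs_le.mp (this.trans hhi) with ha hb
            linarith
          exact add_le_add_right (Real.exp_le_exp.mpr h1) 1
  set D : ℂ := bdfDelta k (Complex.exp (-w)) with hDdef
  have habsD : norm D ≤ 6 * (1 + Real.exp 7) ^ 6 := by
    rw [hDdef, bdfDelta]
    calc norm (∑ j ∈ Finset.Icc 1 k, (1 / (j : ℂ)) * (1 - Complex.exp (-w)) ^ j)
        ≤ ∑ j ∈ Finset.Icc 1 k, norm ((1 / (j : ℂ)) * (1 - Complex.exp (-w)) ^ j) :=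
          by simpa using
            norm_sum_le (Finset.Icc 1 k) (fun j => (1 / (j : ℂ)) * (1 - Complex.exp (-w)) ^ j)
      _ ≤ ∑ _j ∈ Finset.Icc 1 k, (1 + Real.exp 7) ^ 6 := by
          apply Finset.sum_le_sum
          intro j hj
          rw [Finset.mem_Icc] at hj
          rw [norm_mul, norm_pow]
          have h1 : norm (1 / (j : ℂ)) ≤ 1 := by
            rw [norm_div, norm_one, Complex.norm_natCast]
            rw [div_le_one (by exact_mod_cast hj.1.trans_lt' (by norm_num) : (0:ℝ) < j)]
            exact_mod_cast hj.1
          have h2 : norm (1 - Complex.exp (-w)) ^ j ≤ (1 + Real.exp 7) ^ 6 := by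
            calc norm (1 - Complex.exp (-w)) ^ j ≤ (1 + Real.exp 7) ^ j :=
                  pow_le_pow_left₀ (norm_nonneg _) habsx j
              _ ≤ (1 + Real.exp 7) ^ 6 := pow_le_pow_right₀ he7 (hj.2.trans hk6)
          calc norm (1 / (j : ℂ)) * norm (1 - Complex.exp (-w)) ^ j
              ≤ 1 * ((1 + Real.exp 7) ^ 6) := by
                apply mul_le_mul h1 h2 (by positivity) (by norm_num)
            _ = (1 + Real.exp 7) ^ 6 := one_mul _
      _ ≤ 6 * (1 + Real.exp 7) ^ 6 := by
          rw [Finset.sum_const, Nat.card_Icc]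
          have hkk : (k + 1 - 1) = k := by omega
          rw [hkk]
          have : (k : ℝ) ≤ 6 := by exact_mod_cast hk6
          rw [nsmul_eq_mul]
          apply mul_le_mul_of_nonneg_right this (by positivity)
  have hnum : norm (D ^ (g : ℂ) - w ^ (g : ℂ)) ≤ 6 * (1 + Real.exp 7) ^ 6 + 10 := by
    calc norm (D ^ (g : ℂ) - w ^ (g : ℂ))
        ≤ norm (D ^ (g : ℂ)) + norm (w ^ (g : ℂ)) := by
          simpa using norm_sub_le (D ^ (g : ℂ)) (w ^ (g : ℂ))
      _ = norm D ^ g + norm w ^ g := by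
          rw [Complex.norm_cpow_real, Complex.norm_cpow_real]
      _ ≤ (1 + norm D) + (1 + norm w) := by
          have h1 := aux_rpow_le_one_add (norm_nonneg D) hg0.le hg1.le
          have h2 := aux_rpow_le_one_add (norm_nonneg w) hg0.le hg1.le
          linarith
      _ ≤ 6 * (1 + Real.exp 7) ^ 6 + 10 := by linarith
  have hpow : ((1:ℝ)/1024) ^ (7:ℕ) ≤ norm w ^ ((k : ℝ) + g) := by
    have h1 : ((1:ℝ)/1024) ^ ((k:ℝ) + g) ≤ norm w ^ ((k:ℝ) + g) :=
      Real.rpow_le_rpow (by norm_num) hlo (by positivity)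
    have h2 : ((1:ℝ)/1024) ^ ((7:ℕ):ℝ) ≤ ((1:ℝ)/1024) ^ ((k:ℝ) + g) := by
      apply Real.rpow_le_rpow_of_exponent_ge (by norm_num) (by norm_num)
      have : (k : ℝ) ≤ 6 := by exact_mod_cast hk6
      push_cast
      linarith
    rw [Real.rpow_natCast] at h2
    linarith
  have hc1 : ((1:ℝ)/1024) ^ (7:ℕ) * 2 ^ 70 = 1 := by norm_num
  calc norm (D ^ (g : ℂ) - w ^ (g : ℂ))
      ≤ 6 * (1 + Real.exp 7) ^ 6 + 10 := hnum
    _ = (6 * (1 + Real.exp 7) ^ 6 + 10) * 2 ^ 70 * ((1:ℝ)/1024) ^ (7:ℕ) := by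
        rw [mul_assoc, mul_comm ((2:ℝ)^70), ← mul_assoc, mul_assoc, hc1]
        ring
    _ ≤ (6 * (1 + Real.exp 7) ^ 6 + 10) * 2 ^ 70 * norm w ^ ((k : ℝ) + g) := by
        apply mul_le_mul_of_nonneg_left hpow (by positivity)

/-- Combined sector estimate. -/
lemma aux_core (k : ℕ) (hk1 : 1 ≤ k) (hk6 : k ≤ 6) {g : ℝ} (hg0 : 0 < g) (hg1 : g < 1)
    (w : ℂ) (hw : w ≠ 0) (harg : |w.arg| ≤ 2 * π / 3) (hhi : norm w ≤ 7) :
    norm ((bdfDelta k (Complex.exp (-w))) ^ (g : ℂ) - w ^ (g : ℂ))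
      ≤ (768 + (6 * (1 + Real.exp 7) ^ 6 + 10) * 2 ^ 70) * norm w ^ ((k : ℝ) + g) := by
  have hwpow : (0:ℝ) ≤ norm w ^ ((k : ℝ) + g) := Real.rpow_nonneg (norm_nonneg w) _
  have hC : (0:ℝ) ≤ (6 * (1 + Real.exp 7) ^ 6 + 10) * 2 ^ 70 := by positivity
  rcases le_or_gt (norm w) (1/1024) with hle | hlt
  · have := aux_near k hk1 hk6 hg0 hg1 w hw harg hle
    nlinarith
  · have := aux_far k hk1 hk6 hg0 hg1 w hlt.le hhi
    nlinarith

lemma aux_sin_ge {θ : ℝ} (hθ1 : π/2 < θ) (hθ2 : θ ≤ π/2 + π/6) : 1/2 ≤ Real.sin θ := by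
  have hπ := Real.pi_pos
  have h1 : Real.sin θ = Real.cos (θ - π/2) := (Real.cos_sub_pi_div_two θ).symm
  have h2 : Real.cos (π/6) ≤ Real.cos (θ - π/2) :=
    Real.cos_le_cos_of_nonneg_of_le_pi (by linarith) (by linarith) (by linarith)
  have h3 : (1:ℝ)/2 ≤ Real.cos (π/6) := by
    rw [Real.cos_pi_div_six]
    have : (1:ℝ) ≤ Real.sqrt 3 := by
      rw [show (1:ℝ) = Real.sqrt 1 from (Real.sqrt_one).symm]
      exact Real.sqrt_le_sqrt (by norm_num)
    linarith
  linarith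

lemma aux_contour {θ κ τ : ℝ} (hκ : 0 < κ) (hτ : 0 < τ) (hθ1 : π/2 < θ)
    (hθ2 : θ ≤ π/2 + π/6) (hcond : κ * τ * Real.sin θ ≤ π) {z : ℂ}
    (hz : z ∈ contourTrunc θ κ τ) :
    z ≠ 0 ∧ |z.arg| ≤ 2 * π / 3 ∧ norm (z * (τ : ℂ)) ≤ 7 := by
  have hπ := Real.pi_pos
  have hπ315 := Real.pi_lt_d2
  have hsin := aux_sin_ge hθ1 hθ2
  have hθ23 : θ ≤ 2 * π / 3 := by linarith
  have habsτ : norm ((τ : ℂ)) = τ := by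
    rw [Complex.norm_real, Real.norm_eq_abs, abs_of_pos hτ]
  rcases hz with ⟨habs, harg⟩ | ⟨r, hκr, hr2, hcase⟩
  · have hz0 : z ≠ 0 := by
      intro h; rw [h, norm_zero] at habs; exact hκ.ne habs
    refine ⟨hz0, harg.trans hθ23, ?_⟩
    rw [norm_mul, habsτ, habs]
    nlinarith [mul_pos hκ hτ]
  · have hr0 : 0 < r := hκ.trans_le hκr
    have habsz : norm z = r ∧ |z.arg| = θ := by
      rcases hcase with h | h
      · constructor
        · rw [h, norm_mul, Complex.norm_real, Real.norm_eq_abs, abs_of_pos hr0,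
            Complex.norm_exp_ofReal_mul_I, mul_one]
        · rw [h, Complex.exp_mul_I,
            Complex.arg_mul_cos_add_sin_mul_I hr0 ⟨by linarith, by linarith⟩]
          exact abs_of_pos (by linarith : 0 < θ)
      · have h' : z = (r : ℂ) * Complex.exp (((-θ : ℝ) : ℂ) * Complex.I) := by
          rw [h]; push_cast; ring_nf
        constructor
        · rw [h', norm_mul, Complex.norm_real, Real.norm_eq_abs, abs_of_pos hr0,
            Complex.norm_exp_ofReal_mul_I, mul_one]
        · rw [h', Complex.exp_mul_I,
            Complex.arg_mul_cos_add_sin_mul_I hr0 ⟨by linarith, by linarith⟩]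
          rw [abs_of_neg (by linarith : -θ < 0)]; ring
    obtain ⟨habsr, hargθ⟩ := habsz
    have hz0 : z ≠ 0 := by
      intro h; rw [h, norm_zero] at habsr; exact hr0.ne' habsr.symm
    refine ⟨hz0, by rw [hargθ]; exact hθ23, ?_⟩
    rw [norm_mul, habsτ, habsr]
    have hsinpos : 0 < Real.sin θ := by linarith
    have h1 : r * τ ≤ π / Real.sin θ := by
      have := mul_le_mul_of_nonneg_right hr2 hτ.le
      calc r * τ ≤ π / (τ * Real.sin θ) * τ := this
        _ = π / Real.sin θ := by field_simp
    have h2 : π / Real.sin θ ≤ 2 * π := by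
      rw [div_le_iff₀ hsinpos]; nlinarith
    linarith

/-- For 1 ≤ k ≤ 6, γ ∈ (0,1), κ > 0: there is θ₀ ∈ (π/2, π) such that for every
θ ∈ (π/2, θ₀] there is c > 0 with |(δ_τ(e^{−zτ}))^γ − z^γ| ≤ c·τ^k·|z|^{k+γ}
on Γ^τ_{θ,κ}, whenever κ·τ·sin θ ≤ π. -/
theorem bdfDelta_tau_pow_gamma_error (k : ℕ) (hk1 : 1 ≤ k) (hk6 : k ≤ 6)
    (γ : ℝ) (hγ : γ ∈ Set.Ioo (0 : ℝ) 1) (κ : ℝ) (hκ : 0 < κ) :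
    ∃ θ₀ ∈ Set.Ioo (π / 2) π, ∀ θ ∈ Set.Ioc (π / 2) θ₀,
      ∃ c > (0 : ℝ), ∀ τ : ℝ, 0 < τ → κ * τ * Real.sin θ ≤ π →
        ∀ z ∈ contourTrunc θ κ τ,
          ‖(bdfDelta k (Complex.exp (-z * (τ : ℂ))) / (τ : ℂ)) ^ (γ : ℂ)
              - z ^ (γ : ℂ)‖
            ≤ c * τ ^ k * ‖z‖ ^ ((k : ℝ) + γ) := by
  obtain ⟨hγ0, hγ1⟩ := hγ
  have hπ := Real.pi_pos
  refine ⟨π/2 + π/6, ⟨by linarith, by linarith⟩, ?_⟩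
  intro θ hθ
  obtain ⟨hθ1, hθ2⟩ := hθ
  refine ⟨768 + (6 * (1 + Real.exp 7) ^ 6 + 10) * 2 ^ 70, by positivity, ?_⟩
  intro τ hτ hcond z hz
  obtain ⟨hz0, hargz, habs7⟩ := aux_contour hκ hτ hθ1 hθ2 hcond hz
  have hτ0 : (τ : ℂ) ≠ 0 := by exact_mod_cast hτ.ne'
  set w : ℂ := z * (τ : ℂ) with hwdef
  have hw0 : w ≠ 0 := mul_ne_zero hz0 hτ0
  have hargw : |w.arg| ≤ 2 * π / 3 := by
    rw [hwdef, Complex.arg_mul_real hτ z]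
    exact hargz
  have hcore := aux_core k hk1 hk6 hγ0 hγ1 w hw0 hargw habs7
  have hzw : z = w / (τ : ℂ) := by
    rw [hwdef, mul_div_cancel_right₀ z hτ0]
  have hexp : Complex.exp (-z * (τ : ℂ)) = Complex.exp (-w) := by
    rw [hwdef, neg_mul]
  have hτg : norm ((τ : ℂ) ^ (γ : ℂ)) = τ ^ γ := by
    rw [Complex.norm_cpow_eq_rpow_re_of_pos hτ]
    simp
  have hτgpos : (0:ℝ) < τ ^ γ := Real.rpow_pos_of_pos hτ γ
  have hLHS : norm ((bdfDelta k (Complex.exp (-z * (τ : ℂ))) / (τ : ℂ)) ^ (γ : ℂ)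
      - z ^ (γ : ℂ))
      = norm ((bdfDelta k (Complex.exp (-w))) ^ (γ : ℂ) - w ^ (γ : ℂ)) / τ ^ γ := by
    rw [hexp, aux_cpow_div _ hτ hγ0.ne']
    conv_lhs => rw [hzw]
    rw [aux_cpow_div _ hτ hγ0.ne', div_sub_div_same, norm_div, hτg]
  rw [hLHS]
  rw [div_le_iff₀ hτgpos]
  have habsw : norm w = norm z * τ := by
    rw [hwdef, norm_mul, Complex.norm_real, Real.norm_eq_abs, abs_of_pos hτ]
  have hpoweq : norm w ^ ((k:ℝ) + γ)
      = norm z ^ ((k:ℝ) + γ) * (τ ^ k * τ ^ γ) := by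
    rw [habsw, Real.mul_rpow (norm_nonneg z) hτ.le, Real.rpow_add hτ,
      Real.rpow_natCast]
  calc norm ((bdfDelta k (Complex.exp (-w))) ^ (γ : ℂ) - w ^ (γ : ℂ))
      ≤ (768 + (6 * (1 + Real.exp 7) ^ 6 + 10) * 2 ^ 70) * norm w ^ ((k : ℝ) + γ) :=
        hcore
    _ = (768 + (6 * (1 + Real.exp 7) ^ 6 + 10) * 2 ^ 70) * τ ^ k
          * norm z ^ ((k:ℝ) + γ) * τ ^ γ := by
        rw [hpoweq]; ring
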